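/- Let 𝒴 ⊆ ℂⁿ be a p-dimensional subspace whose smallest Ritz value η_p of A in 𝒴 satisfies η_p > λ_{p+1}, let i ∈ {1, …, p}, and let f : ℝ → ℝ satisfy |f(λ₁)| ≥ ⋯ ≥ |f(λ_p)| > max_{j ∈ {p+1, …, n}} |f(λⱼ)|. Then 𝒴' = f(A)𝒴 has dimension p, and its i-th largest Ritz value η'_i satisfies (λ_i − η'_i)/(η'_i − λ_{p+1}) ≤ ((max_{j ∈ {p+1, …, n}} |f(λⱼ)|)² / |f(λ_i)|²) · (λ_i − η_p)/(η_p − λ_{p+1}); in particular η'_i > λ_{p+1}. -/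

import Mathlib

/-- The Rayleigh quotient `ρ(v) = (vᴴAv)/(vᴴv)` of the Hermitian matrix `A`. -/
noncomputable def rayleigh {n : ℕ} (A : Matrix (Fin n) (Fin n) ℂ)
    (v : EuclideanSpace ℂ (Fin n)) : ℝ :=
  ((inner ℂ v (Matrix.toEuclideanLin A v) : ℂ)).re / ‖v‖ ^ 2

/-- The `i`-th largest Ritz value (1-indexed, `i ∈ {1, …, dim S}`) of the Hermitian
matrix `A` in the subspace `S`, characterized via the Courant–Fischer max-min
principle applied inside `S` (equivalently, the `i`-th largest eigenvalue of
`SᴴAS` for any orthonormal basis matrix `S`). -/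
noncomputable def ritzValue {n : ℕ} (A : Matrix (Fin n) (Fin n) ℂ)
    (S : Submodule ℂ (EuclideanSpace ℂ (Fin n))) (i : ℕ) : ℝ :=
  sSup {r : ℝ | ∃ T : Submodule ℂ (EuclideanSpace ℂ (Fin n)), T ≤ S ∧
    Module.finrank ℂ T = i ∧ ∀ v ∈ T, v ≠ 0 → r ≤ rayleigh A v}

/-- `f(A) = ∑ j, f(λ_j) x_j x_jᴴ` as a linear operator, for eigenvalues `lam`
and orthonormal eigenvectors `x` of `A`. -/
noncomputable def matFun {n : ℕ} (lam : Fin n → ℝ)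
    (x : Fin n → EuclideanSpace ℂ (Fin n)) (f : ℝ → ℝ) :
    EuclideanSpace ℂ (Fin n) →ₗ[ℂ] EuclideanSpace ℂ (Fin n) :=
  ∑ j : Fin n, (f (lam j) : ℂ) • ((innerSL ℂ (x j)).toLinearMap.smulRight (x j))

/-- `y` is a Ritz vector of `A` in `S` associated with the Ritz value `η`:
`y ∈ S`, `y ≠ 0`, `ρ(y) = η` and `Ay − ηy ⊥ S`. -/
def IsRitzVector {n : ℕ} (A : Matrix (Fin n) (Fin n) ℂ)
    (S : Submodule ℂ (EuclideanSpace ℂ (Fin n))) (η : ℝ)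
    (y : EuclideanSpace ℂ (Fin n)) : Prop :=
  y ∈ S ∧ y ≠ 0 ∧ rayleigh A y = η ∧
    ∀ v ∈ S, (inner ℂ v (Matrix.toEuclideanLin A y - (η : ℂ) • y) : ℂ) = 0

open Module Submodule Finset

lemma hre (r : ℝ) (z : ℂ) : ((starRingEnd ℂ) z * ((r:ℂ) * z)).re = r * ‖z‖^2 := by
  have h : ‖z‖^2 = z.re^2 + z.im^2 := by
    rw [Complex.sq_norm, Complex.normSq_apply]; ring
  simp only [Complex.mul_re, Complex.conj_re, Complex.conj_im, Complex.ofReal_re,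
    Complex.ofReal_im, Complex.mul_im, h]
  ring

section aux
variable {n : ℕ} (x : Fin n → EuclideanSpace ℂ (Fin n)) (hx : Orthonormal ℂ x)
  (hsp : ∀ v : EuclideanSpace ℂ (Fin n), ∑ j, (inner ℂ (x j) v : ℂ) • x j = v)

include hsp in
lemma inner_expand (v w : EuclideanSpace ℂ (Fin n)) :
    (inner ℂ v w : ℂ) = ∑ j, (starRingEnd ℂ) (inner ℂ (x j) v : ℂ) * (inner ℂ (x j) w : ℂ) := by
  conv_lhs => rw [← hsp v]
  rw [sum_inner]
  simp [inner_smul_left]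

include hsp in
lemma norm_sq_expand (v : EuclideanSpace ℂ (Fin n)) :
    ‖v‖^2 = ∑ j, ‖(inner ℂ (x j) v : ℂ)‖^2 := by
  have h := congrArg Complex.re (inner_expand x hsp v v)
  rw [← inner_self_eq_norm_sq (𝕜 := ℂ) v]
  simp only [RCLike.re_to_complex]
  rw [h, Complex.re_sum]
  congr 1; ext j
  simpa using hre 1 (inner ℂ (x j) v : ℂ)


include hx hsp in
lemma coord_apply_A {A : Matrix (Fin n) (Fin n) ℂ} {lam : Fin n → ℝ}
    (heig : ∀ j, Matrix.toEuclideanLin A (x j) = (lam j : ℂ) • x j)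
    (v : EuclideanSpace ℂ (Fin n)) (j : Fin n) :
    (inner ℂ (x j) (Matrix.toEuclideanLin A v) : ℂ) = (lam j : ℂ) * inner ℂ (x j) v := by
  conv_lhs => rw [← hsp v]
  rw [map_sum, inner_sum]
  have : ∀ k, (inner ℂ (x j) ((Matrix.toEuclideanLin A) ((inner ℂ (x k) v : ℂ) • x k)) : ℂ)
      = (inner ℂ (x k) v : ℂ) * (lam k : ℂ) * (if j = k then 1 else 0) := by
    intro k
    rw [map_smul, heig k, inner_smul_right, inner_smul_right, orthonormal_iff_ite.mp hx]
    ring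
  rw [Finset.sum_congr rfl fun k _ => this k]
  simp [Finset.sum_ite_eq]
  ring

include hx in
lemma coord_apply_matFun {lam : Fin n → ℝ} (f : ℝ → ℝ)
    (v : EuclideanSpace ℂ (Fin n)) (j : Fin n) :
    (inner ℂ (x j) (matFun lam x f v) : ℂ) = (f (lam j) : ℂ) * inner ℂ (x j) v := by
  unfold matFun
  rw [LinearMap.sum_apply, inner_sum]
  have : ∀ k, (inner ℂ (x j) (((f (lam k) : ℂ) •
        ((innerSL ℂ (x k)).toLinearMap.smulRight (x k))) v) : ℂ)
      = (inner ℂ (x k) v : ℂ) * (f (lam k) : ℂ) * (if j = k then 1 else 0) := by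
    intro k
    simp only [LinearMap.smul_apply, LinearMap.smulRight_apply,
      ContinuousLinearMap.coe_coe, innerSL_apply_apply]
    rw [inner_smul_right, inner_smul_right, orthonormal_iff_ite.mp hx]
    ring
  rw [Finset.sum_congr rfl fun k _ => this k]
  simp [Finset.sum_ite_eq]
  ring

include hx hsp in
lemma rayleigh_coords {A : Matrix (Fin n) (Fin n) ℂ} {lam : Fin n → ℝ}
    (heig : ∀ j, Matrix.toEuclideanLin A (x j) = (lam j : ℂ) • x j)
    (v : EuclideanSpace ℂ (Fin n)) :
    ((inner ℂ v (Matrix.toEuclideanLin A v) : ℂ)).re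
      = ∑ j, lam j * ‖(inner ℂ (x j) v : ℂ)‖^2 := by
  rw [inner_expand x hsp v (Matrix.toEuclideanLin A v), Complex.re_sum]
  congr 1; ext j
  rw [coord_apply_A x hx hsp heig v j]
  exact hre (lam j) _

include hx hsp in
lemma rayleigh_le_iff {A : Matrix (Fin n) (Fin n) ℂ} {lam : Fin n → ℝ}
    (heig : ∀ j, Matrix.toEuclideanLin A (x j) = (lam j : ℂ) • x j)
    (v : EuclideanSpace ℂ (Fin n)) (hv : v ≠ 0) (μ : ℝ) :
    μ ≤ rayleigh A v ↔ 0 ≤ ∑ j, (lam j - μ) * ‖(inner ℂ (x j) v : ℂ)‖^2 := by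
  have hD : (0:ℝ) < ‖v‖^2 := pow_pos (norm_pos_iff.mpr hv) 2
  unfold rayleigh
  rw [le_div_iff₀ hD, rayleigh_coords x hx hsp heig v, norm_sq_expand x hsp v,
    Finset.mul_sum]
  rw [show ∑ j, (lam j - μ) * ‖(inner ℂ (x j) v : ℂ)‖^2
      = ∑ j, (lam j * ‖(inner ℂ (x j) v : ℂ)‖^2 - μ * ‖(inner ℂ (x j) v : ℂ)‖^2) by
    congr 1; ext j; ring]
  rw [Finset.sum_sub_distrib]
  constructor <;> intro h <;> linarith

include hx hsp in
lemma le_rayleigh_iff {A : Matrix (Fin n) (Fin n) ℂ} {lam : Fin n → ℝ}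
    (heig : ∀ j, Matrix.toEuclideanLin A (x j) = (lam j : ℂ) • x j)
    (v : EuclideanSpace ℂ (Fin n)) (hv : v ≠ 0) (μ : ℝ) :
    rayleigh A v ≤ μ ↔ 0 ≤ ∑ j, (μ - lam j) * ‖(inner ℂ (x j) v : ℂ)‖^2 := by
  have hD : (0:ℝ) < ‖v‖^2 := pow_pos (norm_pos_iff.mpr hv) 2
  unfold rayleigh
  rw [div_le_iff₀ hD, rayleigh_coords x hx hsp heig v, norm_sq_expand x hsp v,
    Finset.mul_sum]
  rw [show ∑ j, (μ - lam j) * ‖(inner ℂ (x j) v : ℂ)‖^2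
      = ∑ j, (μ * ‖(inner ℂ (x j) v : ℂ)‖^2 - lam j * ‖(inner ℂ (x j) v : ℂ)‖^2) by
    congr 1; ext j; ring]
  rw [Finset.sum_sub_distrib]
  constructor <;> intro h <;> linarith

include hx in
lemma span_coord_zero (s : Set (Fin n)) (y : EuclideanSpace ℂ (Fin n))
    (hy : y ∈ span ℂ (x '' s)) (j : Fin n) (hj : j ∉ s) :
    (inner ℂ (x j) y : ℂ) = 0 := by
  induction hy using Submodule.span_induction with
  | mem z hz =>
    obtain ⟨k, hk, rfl⟩ := hz
    exact hx.2 (fun h => hj (h ▸ hk))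
  | zero => exact inner_zero_right _
  | add a b _ _ ha hb => rw [inner_add_right, ha, hb, add_zero]
  | smul c a _ ha => rw [inner_smul_right, ha, mul_zero]


include hx in
lemma span_image_finrank (s : Finset (Fin n)) :
    finrank ℂ (span ℂ (x '' ↑s)) = s.card := by
  classical
  have li := hx.linearIndependent.comp (Subtype.val : {j // j ∈ s} → Fin n)
    Subtype.val_injective
  have h := finrank_span_eq_card li
  rw [Set.range_comp, Subtype.range_coe_subtype] at h
  rw [show ({j | j ∈ s} : Set (Fin n)) = ↑s from rfl] at h
  rw [h, Fintype.card_coe]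

end aux


set_option maxHeartbeats 2000000 in
/-- (Theorem 3.1, bound (3.4).) With `η_p > λ_{p+1}` and
`|f(λ₁)| ≥ ⋯ ≥ |f(λ_p)| > max_{j>p}|f(λ_j)| = ν_p`, the subspace `𝒴' = f(A)𝒴`
has dimension `p`, its `i`-th largest Ritz value `η'_i` satisfies `η'_i > λ_{p+1}`
and `(λ_i − η'_i)/(η'_i − λ_{p+1}) ≤ (ν_p²/|f(λ_i)|²)·(λ_i − η_p)/(η_p − λ_{p+1})`.
(0-indexed: `lam ⟨j⟩` is `λ_{j+1}`.) -/
theorem stmt11 {n p i : ℕ} (hi : 1 ≤ i) (hip : i ≤ p) (hpn : p < n)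
    (A : Matrix (Fin n) (Fin n) ℂ) (hA : A.IsHermitian)
    (lam : Fin n → ℝ) (hlam : Antitone lam)
    (x : Fin n → EuclideanSpace ℂ (Fin n)) (hx : Orthonormal ℂ x)
    (heig : ∀ j, Matrix.toEuclideanLin A (x j) = (lam j : ℂ) • x j)
    (Y : Submodule ℂ (EuclideanSpace ℂ (Fin n))) (hY : Module.finrank ℂ Y = p)
    (hηp : lam ⟨p, hpn⟩ < ritzValue A Y p)
    (f : ℝ → ℝ) (νp : ℝ)
    (hνp : IsGreatest ((fun j => |f (lam j)|) '' {j : Fin n | p ≤ (j : ℕ)}) νp)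
    (hmono : ∀ j k : Fin n, (j : ℕ) ≤ (k : ℕ) → (k : ℕ) < p →
      |f (lam k)| ≤ |f (lam j)|)
    (hgt : νp < |f (lam ⟨p - 1, by omega⟩)|) :
    Module.finrank ℂ (Y.map (matFun lam x f)) = p ∧
    lam ⟨p, hpn⟩ < ritzValue A (Y.map (matFun lam x f)) i ∧
    (lam ⟨i - 1, by omega⟩ - ritzValue A (Y.map (matFun lam x f)) i) /
        (ritzValue A (Y.map (matFun lam x f)) i - lam ⟨p, hpn⟩) ≤
      νp ^ 2 / |f (lam ⟨i - 1, by omega⟩)| ^ 2 *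
        ((lam ⟨i - 1, by omega⟩ - ritzValue A Y p) /
          (ritzValue A Y p - lam ⟨p, hpn⟩)) := by
  classical
  have hn : 0 < n := lt_of_le_of_lt (Nat.zero_le p) hpn
  haveI : Nonempty (Fin n) := ⟨⟨0, hn⟩⟩
  -- basis expansion
  have hsp : ∀ v : EuclideanSpace ℂ (Fin n), ∑ j, (inner ℂ (x j) v : ℂ) • x j = v := by
    have hcard : Fintype.card (Fin n) = finrank ℂ (EuclideanSpace ℂ (Fin n)) := by
      rw [Fintype.card_fin, finrank_euclideanSpace_fin]
    have htop : ⊤ ≤ Submodule.span ℂ (Set.range x) :=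
      (hx.linearIndependent.span_eq_top_of_card_eq_finrank hcard).ge
    intro v
    have := (OrthonormalBasis.mk hx htop).sum_repr' v
    simpa [OrthonormalBasis.coe_mk] using this
  set Φ := matFun lam x f with hΦ
  set β := lam ⟨p, hpn⟩ with hβ
  set α := lam ⟨i - 1, by omega⟩ with hα
  set η := ritzValue A Y p with hη
  set F := |f (lam ⟨i - 1, by omega⟩)| with hF
  have hβη : β < η := hηp
  have hνp0 : 0 ≤ νp := by
    obtain ⟨j0, _, h0⟩ := hνp.1
    rw [← h0]; exact abs_nonneg _
  have hFν : νp < F := by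
    refine lt_of_lt_of_le hgt (hmono ⟨i-1, by omega⟩ ⟨p-1, by omega⟩ (by simp; omega) (by simp; omega))
  have hF0 : 0 < F := lt_of_le_of_lt hνp0 hFν
  -- global Rayleigh bounds
  have hρmin : ∀ v : EuclideanSpace ℂ (Fin n), v ≠ 0 →
      lam ⟨n-1, by omega⟩ ≤ rayleigh A v := by
    intro v hv
    rw [rayleigh_le_iff x hx hsp heig v hv]
    refine Finset.sum_nonneg fun j _ => mul_nonneg ?_ (by positivity)
    have : lam j ≥ lam ⟨n-1, by omega⟩ := hlam (by simp [Fin.le_def]; omega)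
    linarith
  have hρmax : ∀ v : EuclideanSpace ℂ (Fin n), v ≠ 0 →
      rayleigh A v ≤ lam ⟨0, hn⟩ := by
    intro v hv
    rw [le_rayleigh_iff x hx hsp heig v hv]
    refine Finset.sum_nonneg fun j _ => mul_nonneg ?_ (by positivity)
    have : lam j ≤ lam ⟨0, hn⟩ := hlam (by simp [Fin.le_def])
    linarith
  -- min Rayleigh quotient over Y
  have hmin : ∀ y ∈ Y, y ≠ 0 → η ≤ rayleigh A y := by
    intro y hyY hy0
    refine csSup_le ⟨lam ⟨n-1, by omega⟩, Y, le_rfl, hY, fun v _ hv0 => hρmin v hv0⟩ ?_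
    rintro r ⟨T, hTY, hTrank, hr⟩
    have hTeq : T = Y := Submodule.eq_of_le_of_finrank_le hTY (by rw [hY, hTrank])
    exact hr y (hTeq ▸ hyY) hy0
  -- coordinates vanish on orthogonal complements etc.
  -- η ≤ α
  have hαη : η ≤ α := by
    set s2 : Finset (Fin n) := Finset.Ici (⟨i-1, by omega⟩ : Fin n) with hs2
    set W2 := Submodule.span ℂ (x '' ↑s2) with hW2
    have hW2rank : finrank ℂ W2 = n - (i-1) := by
      rw [hW2, span_image_finrank x hx s2, hs2, Fin.card_Ici]
    have hsum := Submodule.finrank_sup_add_finrank_inf_eq Y W2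
    have hle : finrank ℂ ↥(Y ⊔ W2) ≤ n := by
      have := Submodule.finrank_le (Y ⊔ W2)
      rwa [finrank_euclideanSpace_fin] at this
    have hpos : 0 < finrank ℂ ↥(Y ⊓ W2) := by
      rw [hY, hW2rank] at hsum; omega
    have hne : Y ⊓ W2 ≠ ⊥ := by
      intro h
      rw [h, finrank_bot] at hpos; omega
    obtain ⟨y, hy, hy0⟩ := Submodule.exists_mem_ne_zero_of_ne_bot hne
    have h1 : η ≤ rayleigh A y := hmin y (Submodule.mem_inf.mp hy).1 hy0
    have h2 : rayleigh A y ≤ α := by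
      rw [le_rayleigh_iff x hx hsp heig y hy0]
      refine Finset.sum_nonneg fun j _ => ?_
      by_cases hj : (j : ℕ) < i - 1
      · have : (inner ℂ (x j) y : ℂ) = 0 := by
          refine span_coord_zero x hx (↑s2) y (Submodule.mem_inf.mp hy).2 j ?_
          simp [hs2, Fin.le_def]; omega
        rw [this]; simp
      · refine mul_nonneg ?_ (by positivity)
        have : lam j ≤ α := hα ▸ hlam (by simp [Fin.le_def]; omega)
        linarith
    linarith
  have hgap : β < α := lt_of_lt_of_le hβη hαη
  -- injectivity of Φ on Y
  have hinj : ∀ y ∈ Y, Φ y = 0 → y = 0 := by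
    intro y hyY h0
    by_contra hy0
    have hcoords : ∀ j : Fin n, (j : ℕ) < p → (inner ℂ (x j) y : ℂ) = 0 := by
      intro j hj
      have h1 : (f (lam j) : ℂ) * inner ℂ (x j) y = 0 := by
        rw [← coord_apply_matFun x hx f y j, ← hΦ, h0, inner_zero_right]
      have h2 : f (lam j) ≠ 0 := by
        have : νp < |f (lam j)| :=
          lt_of_lt_of_le hgt (hmono j ⟨p-1, by omega⟩ (by simp; omega) (by simp; omega))
        intro h; rw [h] at this; simp at this; linarith
      have : (f (lam j) : ℂ) ≠ 0 := by exact_mod_cast h2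
      exact (mul_eq_zero.mp h1).resolve_left this
    have hle : rayleigh A y ≤ β := by
      rw [le_rayleigh_iff x hx hsp heig y hy0]
      refine Finset.sum_nonneg fun j _ => ?_
      by_cases hj : (j : ℕ) < p
      · rw [hcoords j hj]; simp
      · refine mul_nonneg ?_ (by positivity)
        have : lam j ≤ β := hβ ▸ hlam (by simp [Fin.le_def]; omega)
        linarith
    have := hmin y hyY hy0
    linarith
  -- finrank of images under Φ
  have hmap : ∀ T : Submodule ℂ (EuclideanSpace ℂ (Fin n)), T ≤ Y →
      finrank ℂ (T.map Φ) = finrank ℂ T := by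
    intro T hT
    have heq : T.map Φ = LinearMap.range (Φ ∘ₗ T.subtype) := by
      rw [LinearMap.range_comp, Submodule.range_subtype]
    rw [heq, LinearMap.finrank_range_of_inj]
    intro a b hab
    have h0 : Φ ((a : EuclideanSpace ℂ (Fin n)) - b) = 0 := by
      rw [map_sub]; simpa [sub_eq_zero] using hab
    have := hinj _ (Y.sub_mem (hT a.2) (hT b.2)) h0
    exact Subtype.ext (by rwa [sub_eq_zero] at this)
  -- the target value ηs
  have hηβpos : 0 < η - β := by linarith
  set c := νp^2 * (α - η) / (F^2 * (η - β)) with hc_def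
  have hc0 : 0 ≤ c := by
    refine div_nonneg (mul_nonneg (by positivity) (by linarith)) ?_
    positivity
  have hD : 0 < 1 + c := by linarith
  set ηs := β + (α - β)/(1+c) with hηs_def
  have hηsβ : ηs - β = (α - β)/(1+c) := by rw [hηs_def]; ring
  have hc2 : F^2 * ((η - β) * c) = νp^2 * (α - η) := by
    rw [hc_def]; field_simp
  have hsβ : β < ηs := by
    have : 0 < (α - β)/(1+c) := div_pos (by linarith) hD
    rw [hηs_def]; linarith
  have hsα : ηs ≤ α := by
    have : (α - β)/(1+c) ≤ α - β := div_le_self (by linarith) (by linarith)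
    rw [hηs_def]; linarith
  have hαηs : α - ηs = (α - β) * c / (1+c) := by
    rw [hηs_def]; field_simp; ring
  have hF2ν2 : νp^2 ≤ F^2 := pow_le_pow_left₀ hνp0 (le_of_lt hFν) 2
  have hcαη : (η - β) * c ≤ α - η := by
    have h2 : F^2*((η-β)*c) ≤ F^2*(α-η) := by
      rw [hc2]
      exact mul_le_mul_of_nonneg_right hF2ν2 (by linarith)
    exact le_of_mul_le_mul_left h2 (by positivity)
  have hsη : η ≤ ηs := by
    have h1 : (η - β) * (1 + c) ≤ α - β := by linarith [hcαη]
    have := (le_div_iff₀ hD).mpr h1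
    rw [hηs_def]; linarith
  have hslope : νp^2 * (ηs - β) ≤ F^2 * (η - β) := by
    have h1 : νp^2*(α-β) ≤ F^2*(η-β)*(1+c) := by
      have h4 := mul_le_mul_of_nonneg_right hF2ν2 (le_of_lt hηβpos)
      linarith [hc2, h4]
    rw [hηsβ, mul_div_assoc']
    exact (div_le_iff₀ hD).mpr h1
  have hkey : F^2 * (η - β) * (α - ηs) = νp^2 * (ηs - β) * (α - η) := by
    have h5 : F^2*(η-β)*((α-β)*c) = νp^2*(α-β)*(α-η) := by linear_combination (α-β)*hc2
    rw [hαηs, hηsβ]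
    calc F^2*(η-β)*((α-β)*c/(1+c)) = F^2*(η-β)*((α-β)*c)/(1+c) := by ring
      _ = νp^2*(α-β)*(α-η)/(1+c) := by rw [h5]
      _ = νp^2*((α-β)/(1+c))*(α-η) := by ring
  -- the subspace Z (T0) of dimension i
  set sW : Finset (Fin n) := Finset.Ico (⟨i, by omega⟩ : Fin n) ⟨p, hpn⟩ with hsW
  set W := Submodule.span ℂ (x '' ↑sW) with hW
  have hWrank : finrank ℂ W = p - i := by
    rw [hW, span_image_finrank x hx sW, hsW, Fin.card_Ico]
  have hWorank : finrank ℂ Wᗮ = n - (p - i) := by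
    have := Submodule.finrank_add_finrank_orthogonal W
    rw [hWrank, finrank_euclideanSpace_fin] at this
    omega
  have hinf : i ≤ finrank ℂ ↥(Y ⊓ Wᗮ) := by
    have hsum := Submodule.finrank_sup_add_finrank_inf_eq Y Wᗮ
    have hle : finrank ℂ ↥(Y ⊔ Wᗮ) ≤ n := by
      have := Submodule.finrank_le (Y ⊔ Wᗮ)
      rwa [finrank_euclideanSpace_fin] at this
    rw [hY, hWorank] at hsum
    omega
  set bb := Module.finBasis ℂ ↥(Y ⊓ Wᗮ) with hbb
  set g : Fin i → EuclideanSpace ℂ (Fin n) :=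
    fun k => ((bb (Fin.castLE hinf k) : EuclideanSpace ℂ (Fin n))) with hg
  have li_g : LinearIndependent ℂ g := by
    have h1 : LinearIndependent ℂ (fun k => ((bb k : EuclideanSpace ℂ (Fin n)))) :=
      bb.linearIndependent.map' (Y ⊓ Wᗮ).subtype (Submodule.ker_subtype _)
    exact h1.comp (Fin.castLE hinf) (Fin.castLE_injective hinf)
  set T0 := Submodule.span ℂ (Set.range g) with hT0
  have hT0rank : finrank ℂ T0 = i := by
    rw [hT0, finrank_span_eq_card li_g, Fintype.card_fin]
  have hT0le : T0 ≤ Y ⊓ Wᗮ := by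
    rw [hT0, Submodule.span_le]
    rintro _ ⟨k, rfl⟩
    exact (bb (Fin.castLE hinf k)).2
  have hT0Y : T0 ≤ Y := hT0le.trans inf_le_left
  -- coordinates of elements of T0 vanish in the middle range
  have hcoordW : ∀ y ∈ T0, ∀ j : Fin n, i ≤ (j:ℕ) → (j:ℕ) < p →
      (inner ℂ (x j) y : ℂ) = 0 := by
    intro y hy j hj1 hj2
    have hyW : y ∈ Wᗮ := (hT0le hy).2
    have hxjW : x j ∈ W := by
      refine Submodule.subset_span ⟨j, ?_, rfl⟩
      simp [hsW, Finset.mem_Ico, Fin.le_def, Fin.lt_def]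
      omega
    exact (Submodule.mem_orthogonal W y).mp hyW (x j) hxjW
  -- the main Rayleigh quotient bound on Φ T0
  have hbound : ∀ y ∈ T0, y ≠ 0 → ηs ≤ rayleigh A (Φ y) := by
    intro y hyT0 hy0
    have hΦy0 : Φ y ≠ 0 := fun h => hy0 (hinj y (hT0Y hyT0) h)
    rw [rayleigh_le_iff x hx hsp heig (Φ y) hΦy0]
    have hcoord : ∀ j, ‖(inner ℂ (x j) (Φ y) : ℂ)‖^2
        = |f (lam j)|^2 * ‖(inner ℂ (x j) y : ℂ)‖^2 := by
      intro j
      rw [hΦ, coord_apply_matFun x hx f y j, norm_mul, mul_pow, Complex.norm_real,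
        Real.norm_eq_abs]
    have hsum1 : 0 ≤ ∑ j, (lam j - η) * ‖(inner ℂ (x j) y : ℂ)‖^2 :=
      (rayleigh_le_iff x hx hsp heig y hy0 η).mp (hmin y (hT0Y hyT0) hy0)
    have hterm : ∀ j : Fin n,
        νp^2*(ηs-β)*((lam j - η) * ‖(inner ℂ (x j) y : ℂ)‖^2)
        ≤ (η-β)*((lam j - ηs) * ‖(inner ℂ (x j) (Φ y) : ℂ)‖^2) := by
      intro j
      rw [hcoord j]
      set u := ‖(inner ℂ (x j) y : ℂ)‖^2 with hu_def
      have hu : 0 ≤ u := by positivity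
      by_cases hj1 : (j:ℕ) < i
      · have hlamα : α ≤ lam j := hα ▸ hlam (by simp [Fin.le_def]; omega)
        have hFj : F ≤ |f (lam j)| := hmono j ⟨i-1, by omega⟩ (by simp; omega) (by simp; omega)
        have hG2 : F^2 ≤ |f (lam j)|^2 := pow_le_pow_left₀ hF0.le hFj 2
        have p1 : 0 ≤ (η-β)*(lam j-ηs)*u*(|f (lam j)|^2 - F^2) := by
          refine mul_nonneg (mul_nonneg (mul_nonneg (by linarith) (by linarith)) hu) (by linarith)
        have p2 : 0 ≤ (F^2*(η-β) - νp^2*(ηs-β)) * ((lam j - α)*u) := by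
          refine mul_nonneg (by linarith [hslope]) (mul_nonneg (by linarith) hu)
        have p3 : F^2*(η-β)*(α-ηs)*u = νp^2*(ηs-β)*(α-η)*u := by rw [hkey]
        linarith [p1, p2, p3]
      · by_cases hj2 : (j:ℕ) < p
        · have hu0 : u = 0 := by
            rw [hu_def, hcoordW y hyT0 j (by omega) hj2]
            simp
          rw [hu0]
          simp
        · have hlamβ : lam j ≤ β := hβ ▸ hlam (by simp [Fin.le_def]; omega)
          have hGν : |f (lam j)| ≤ νp := hνp.2 ⟨j, by simp; omega, rfl⟩
          have hG2 : |f (lam j)|^2 ≤ νp^2 := pow_le_pow_left₀ (abs_nonneg _) hGν 2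
          have p1 : 0 ≤ (η-β)*(ηs-lam j)*u*(νp^2 - |f (lam j)|^2) := by
            refine mul_nonneg (mul_nonneg (mul_nonneg (by linarith) (by linarith)) hu) (by linarith)
          have p2 : 0 ≤ νp^2*((ηs-η)*((β-lam j)*u)) := by
            refine mul_nonneg (by positivity) (mul_nonneg (by linarith) (mul_nonneg (by linarith) hu))
          linarith [p1, p2]
    have hchain : νp^2*(ηs-β) * (∑ j, (lam j - η) * ‖(inner ℂ (x j) y : ℂ)‖^2)
        ≤ (η-β) * (∑ j, (lam j - ηs) * ‖(inner ℂ (x j) (Φ y) : ℂ)‖^2) := by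
      rw [Finset.mul_sum, Finset.mul_sum]
      exact Finset.sum_le_sum fun j _ => hterm j
    have h0le : (0:ℝ) ≤ νp^2*(ηs-β) := mul_nonneg (by positivity) (by linarith)
    have hfin : (η-β)*0 ≤ (η-β)*(∑ j, (lam j - ηs) * ‖(inner ℂ (x j) (Φ y) : ℂ)‖^2) := by
      rw [mul_zero]
      exact le_trans (mul_nonneg h0le hsum1) hchain
    exact le_of_mul_le_mul_left hfin hηβpos
  -- ηs is a lower bound for the i-th Ritz value of the mapped space
  have hηs_le : ηs ≤ ritzValue A (Y.map Φ) i := by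
    apply le_csSup
    · refine ⟨lam ⟨0, hn⟩, ?_⟩
      rintro r ⟨T, hT, hTrank, hb⟩
      have hTne : T ≠ ⊥ := by
        intro h
        rw [h, finrank_bot] at hTrank
        omega
      obtain ⟨v, hvT, hv0⟩ := Submodule.exists_mem_ne_zero_of_ne_bot hTne
      exact (hb v hvT hv0).trans (hρmax v hv0)
    · refine ⟨T0.map Φ, Submodule.map_mono hT0Y, by rw [hmap T0 hT0Y, hT0rank], ?_⟩
      rintro v hv hv0
      obtain ⟨y, hyT0, rfl⟩ := Submodule.mem_map.mp hv
      have hy0 : y ≠ 0 := by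
        rintro rfl
        exact hv0 (map_zero Φ)
      exact hbound y hyT0 hy0
  set η' := ritzValue A (Y.map Φ) i with hη'
  have hβη' : β < η' := lt_of_lt_of_le hsβ hηs_le
  refine ⟨by rw [hmap Y le_rfl, hY], hβη', ?_⟩
  show (α - η')/(η' - β) ≤ νp^2/F^2 * ((α - η)/(η - β))
  have hstep1 : (α - η')/(η' - β) ≤ (α - ηs)/(ηs - β) := by
    rw [div_le_div_iff₀ (by linarith) (by linarith)]
    have hp : 0 ≤ (η' - ηs)*(α - β) := mul_nonneg (by linarith [hηs_le]) (by linarith)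
    linarith [hp]
  have h7 : α - ηs = c*(ηs - β) := by
    rw [hαηs, hηsβ]; ring
  have hstep2 : (α - ηs)/(ηs - β) = c := by
    rw [h7, mul_div_assoc, div_self (by linarith : ηs - β ≠ 0), mul_one]
  have hstep3 : c = νp^2/F^2 * ((α - η)/(η - β)) := by
    rw [hc_def, div_mul_div_comm]
  rw [hstep2, hstep3] at hstep1
  exact hstep1
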